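/- For any positive semidefinite operator ρ and its associated pinching map P_ρ, the pinching inequality holds: P_ρ(ω) ≥ ω / |Spec(ρ)| for every positive semidefinite ω, where |Spec(ρ)| is the number of distinct eigenvalues of ρ and ≥ denotes the Loewner order. -/

import Mathlib

open scoped Kronecker ComplexOrder
open Matrix

noncomputable section
namespace GEAT

variable {n : Type*} [Fintype n] [DecidableEq n]

/-- Partial trace over the second tensor factor. -/
def ptr2 {A R : Type*} [Fintype R] (M : Matrix (A × R) (A × R) ℂ) : Matrix A A ℂ :=
  fun a a' => ∑ r, M (a, r) (a', r)

/-- Partial trace over the first tensor factor. -/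
def ptr1 {A R : Type*} [Fintype A] (M : Matrix (A × R) (A × R) ℂ) : Matrix R R ℂ :=
  fun r r' => ∑ a, M (a, r) (a, r')

/-- The tensor extension `Φ ⊗ id_C` of a linear map on matrices. -/
def lext {A B : Type*} [Fintype A] [DecidableEq A] [Fintype B] [DecidableEq B]
    (Φ : Matrix A A ℂ →ₗ[ℂ] Matrix B B ℂ) (C : Type*) [Fintype C] [DecidableEq C] :
    Matrix (A × C) (A × C) ℂ →ₗ[ℂ] Matrix (B × C) (B × C) ℂ where
  toFun M := fun p q => Φ (fun a a' => M (a, p.2) (a', q.2)) p.1 q.1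
  map_add' M N := by
    funext p q
    have h : (fun a a' => (M + N) (a, p.2) (a', q.2))
        = (fun a a' => M (a, p.2) (a', q.2)) + (fun a a' => N (a, p.2) (a', q.2)) := rfl
    show Φ _ p.1 q.1 = _
    rw [h]
    exact congrFun (congrFun (map_add Φ _ _) p.1) q.1
  map_smul' c M := by
    funext p q
    have h : (fun a a' => (c • M) (a, p.2) (a', q.2))
        = c • (fun a a' => M (a, p.2) (a', q.2)) := rfl
    show Φ _ p.1 q.1 = _
    rw [h]
    exact congrFun (congrFun (_root_.map_smul Φ _ _) p.1) q.1

/-- Complete positivity of a linear map on matrices. -/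
def IsCPMap {A B : Type*} [Fintype A] [DecidableEq A] [Fintype B] [DecidableEq B]
    (Φ : Matrix A A ℂ →ₗ[ℂ] Matrix B B ℂ) : Prop :=
  ∀ (k : ℕ) (M : Matrix (A × Fin k) (A × Fin k) ℂ), M.PosSemidef → ((lext Φ (Fin k)) M).PosSemidef

/-- Trace preservation. -/
def IsTPMap {A B : Type*} [Fintype A] [DecidableEq A] [Fintype B] [DecidableEq B]
    (Φ : Matrix A A ℂ →ₗ[ℂ] Matrix B B ℂ) : Prop :=
  ∀ M, (Φ M).trace = M.trace

/-- Quantum channel: completely positive and trace preserving. -/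
def IsCPTPMap {A B : Type*} [Fintype A] [DecidableEq A] [Fintype B] [DecidableEq B]
    (Φ : Matrix A A ℂ →ₗ[ℂ] Matrix B B ℂ) : Prop :=
  IsCPMap Φ ∧ IsTPMap Φ

/-- A density matrix. -/
def IsState {A : Type*} [Fintype A] (ρ : Matrix A A ℂ) : Prop :=
  ρ.PosSemidef ∧ ρ.trace = 1

/-- Real matrix power, via the continuous functional calculus. -/
def mrpow (M : Matrix n n ℂ) (p : ℝ) : Matrix n n ℂ :=
  cfc (fun x : ℝ => x ^ p) M

/-- Sandwiched Rényi divergence of order α (base-2 logarithm). -/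
def sandwichedRenyi (α : ℝ) (ρ σ : Matrix n n ℂ) : ℝ :=
  (α - 1)⁻¹ * Real.logb 2
    ((mrpow (mrpow σ ((1 - α) / (2 * α)) * ρ * mrpow σ ((1 - α) / (2 * α))) α).trace.re)

/-- Conditional Rényi entropy `H_α↓(A|B) = −D_α(ρ_AB ‖ 1_A ⊗ ρ_B)`. -/
def condH (α : ℝ) {A B : Type*} [Fintype A] [DecidableEq A] [Fintype B]
    [DecidableEq B] (ρ : Matrix (A × B) (A × B) ℂ) : ℝ :=
  - sandwichedRenyi α ρ ((1 : Matrix A A ℂ) ⊗ₖ ptr1 ρ)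

/-- Conditional Rényi entropy `H_α↑(A|B) = sup_σ −D_α(ρ_AB ‖ 1_A ⊗ σ_B)`. -/
def condHup (α : ℝ) {A B : Type*} [Fintype A] [DecidableEq A] [Fintype B]
    [DecidableEq B] (ρ : Matrix (A × B) (A × B) ℂ) : ℝ :=
  ⨆ σ : {σ : Matrix B B ℂ // IsState σ},
    - sandwichedRenyi α ρ ((1 : Matrix A A ℂ) ⊗ₖ (σ : Matrix B B ℂ))

/-- Von Neumann entropy (base 2). -/
def vnEntropy (ρ : Matrix n n ℂ) : ℝ :=
  - ((cfc (fun x : ℝ => x * Real.logb 2 x) ρ).trace.re)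

/-- Conditional von Neumann entropy `H(A|B) = H(AB) − H(B)`. -/
def condVN {A B : Type*} [Fintype A] [DecidableEq A] [Fintype B] [DecidableEq B]
    (ρ : Matrix (A × B) (A × B) ℂ) : ℝ :=
  vnEntropy ρ - vnEntropy (ptr1 ρ)

/-- Max-relative entropy `D_max(ρ‖σ) = log min {λ ≥ 0 : ρ ≤ λσ}`. -/
def Dmax (ρ σ : Matrix n n ℂ) : ℝ :=
  Real.logb 2 (sInf {l : ℝ | 0 ≤ l ∧ (l • σ - ρ).PosSemidef})

/-- Fidelity `F(ρ,σ) = Tr √(√σ ρ √σ)`. -/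
def fidelity (ρ σ : Matrix n n ℂ) : ℝ :=
  ((mrpow (mrpow σ (1/2 : ℝ) * ρ * mrpow σ (1/2 : ℝ)) (1/2 : ℝ)).trace).re

/-- Purified distance. -/
def purifiedDist (ρ σ : Matrix n n ℂ) : ℝ :=
  Real.sqrt (1 - (fidelity ρ σ) ^ 2)

/-- Trace norm. -/
def trNorm {m : Type*} [Fintype m] [DecidableEq m] {k : Type*} [Fintype k]
    (M : Matrix k m ℂ) : ℝ :=
  ((mrpow (Mᴴ * M) (1/2 : ℝ)).trace).re

/-- Smoothed conditional min-entropy (smoothing in purified distance). -/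
def smoothHmin (ε : ℝ) {A B : Type*} [Fintype A] [DecidableEq A] [Fintype B]
    [DecidableEq B] (ρ : Matrix (A × B) (A × B) ℂ) : ℝ :=
  sSup {h : ℝ | ∃ τ : Matrix (A × B) (A × B) ℂ, τ.PosSemidef ∧ τ.trace.re ≤ 1 ∧
    purifiedDist ρ τ ≤ ε ∧ ∃ σ : Matrix B B ℂ, IsState σ ∧
      h = - Dmax τ ((1 : Matrix A A ℂ) ⊗ₖ σ)}

/-- Smoothed conditional max-entropy (smoothing in purified distance). -/
def smoothHmax (ε : ℝ) {A B : Type*} [Fintype A] [DecidableEq A] [Fintype B]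
    [DecidableEq B] (ρ : Matrix (A × B) (A × B) ℂ) : ℝ :=
  Real.logb 2 (sInf {v : ℝ | ∃ τ : Matrix (A × B) (A × B) ℂ, τ.PosSemidef ∧ τ.trace.re ≤ 1 ∧
    purifiedDist ρ τ ≤ ε ∧
    v = ⨆ σ : {σ : Matrix B B ℂ // IsState σ},
      (trNorm (mrpow τ (1/2 : ℝ) * mrpow ((1 : Matrix A A ℂ) ⊗ₖ (σ : Matrix B B ℂ)) (1/2 : ℝ))) ^ 2})

/-- n-fold tensor power of a matrix. -/
def tpow {A : Type*} [Fintype A] (ρ : Matrix A A ℂ) (m : ℕ) :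
    Matrix (Fin m → A) (Fin m → A) ℂ :=
  fun x y => ∏ i, ρ (x i) (y i)

/-- n-fold tensor power of a linear map on matrices. -/
def npow {A B : Type*} [Fintype A] [DecidableEq A] [Fintype B] [DecidableEq B]
    (Φ : Matrix A A ℂ →ₗ[ℂ] Matrix B B ℂ) (m : ℕ) :
    Matrix (Fin m → A) (Fin m → A) ℂ →ₗ[ℂ] Matrix (Fin m → B) (Fin m → B) ℂ where
  toFun M := fun x y => ∑ a : Fin m → A, ∑ a' : Fin m → A,
    M a a' * ∏ i, Φ (Matrix.single (a i) (a' i) 1) (x i) (y i)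
  map_add' M N := by
    funext x y
    show ∑ a : Fin m → A, ∑ a' : Fin m → A, _ = _
    simp [Matrix.add_apply, add_mul, Finset.sum_add_distrib]
    rfl
  map_smul' c M := by
    funext x y
    show ∑ a : Fin m → A, ∑ a' : Fin m → A, _ = _
    simp [Matrix.smul_apply, smul_eq_mul, Finset.mul_sum, mul_assoc]
    show _ = c * _
    simp [Finset.mul_sum]

/-- Stabilised channel divergence of order α. -/
def channelDiv (α : ℝ) {A B : Type*} [Fintype A] [DecidableEq A] [Fintype B]
    [DecidableEq B] (Φ Ψ : Matrix A A ℂ →ₗ[ℂ] Matrix B B ℂ) : ℝ :=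
  ⨆ ω : {ω : Matrix (A × A) (A × A) ℂ // IsState ω},
    sandwichedRenyi α (lext Φ A (ω : Matrix (A × A) (A × A) ℂ))
      (lext Ψ A (ω : Matrix (A × A) (A × A) ℂ))

/-- Regularised channel divergence `sup_n (1/n) D_α(Φ^{⊗n} ‖ Ψ^{⊗n})`. -/
def channelDivReg (α : ℝ) {A B : Type*} [Fintype A] [DecidableEq A] [Fintype B]
    [DecidableEq B] (Φ Ψ : Matrix A A ℂ →ₗ[ℂ] Matrix B B ℂ) : ℝ :=
  ⨆ m : ℕ, ((m : ℝ) + 1)⁻¹ * channelDiv α (npow Φ (m + 1)) (npow Ψ (m + 1))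

open scoped Classical in
/-- Spectral projector of a Hermitian matrix onto the eigenspace of `t`. -/
def specProj {M : Matrix n n ℂ} (hM : M.IsHermitian) (t : ℝ) : Matrix n n ℂ :=
  ∑ i : n, if hM.eigenvalues i = t then
    (hM.eigenvectorUnitary : Matrix n n ℂ) * Matrix.single i i 1 *
      star (hM.eigenvectorUnitary : Matrix n n ℂ)
  else 0

open scoped Classical in
/-- The spectral pinching map `P_M(ω) = Σ_λ P_λ ω P_λ` (zero if `M` is not Hermitian). -/
def pinching (M ω : Matrix n n ℂ) : Matrix n n ℂ :=
  if hM : M.IsHermitian then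
    ∑ t ∈ Finset.univ.image hM.eigenvalues, specProj hM t * ω * specProj hM t
  else 0



section PinchingAux

variable {A : Type*} [Fintype A] [DecidableEq A]

open scoped MatrixOrder in
def _root_.Matrix.PosSemidef.sqrt {M : Matrix A A ℂ} (_ : M.PosSemidef) : Matrix A A ℂ :=
  CFC.sqrt M

open scoped MatrixOrder in
lemma _root_.Matrix.PosSemidef.sqrt_mul_self {M : Matrix A A ℂ} (hM : M.PosSemidef) :
    hM.sqrt * hM.sqrt = M :=
  CFC.sqrt_mul_sqrt_self M hM.nonneg

open scoped MatrixOrder in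
lemma _root_.Matrix.PosSemidef.posSemidef_sqrt {M : Matrix A A ℂ} (hM : M.PosSemidef) :
    hM.sqrt.PosSemidef :=
  (CFC.sqrt_nonneg M).posSemidef

lemma psd_add {M N : Matrix A A ℂ} (hM : M.PosSemidef) (hN : N.PosSemidef) :
    (M + N).PosSemidef :=
  hM.add hN

lemma psd_smul {M : Matrix A A ℂ} {c : ℂ} (hc : 0 ≤ c) (hM : M.PosSemidef) :
    (c • M).PosSemidef := by
  have him : c.im = 0 := (Complex.le_def.mp hc).2.symm
  have hstar : star c = c := by
    rw [Complex.star_def, Complex.conj_eq_iff_im]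
    exact him
  refine ⟨?_, fun x => ?_⟩
  · show (c • M)ᴴ = c • M
    rw [conjTranspose_smul, hstar, hM.1.eq]
  · exact (hM.smul hc).2 x

lemma specProj_conjTranspose {M : Matrix A A ℂ} (hM : M.IsHermitian) (t : ℝ) :
    (specProj hM t)ᴴ = specProj hM t := by
  classical
  unfold specProj
  rw [conjTranspose_sum]
  refine Finset.sum_congr rfl fun i _ => ?_
  have hE : (Matrix.single i i (1 : ℂ))ᴴ = Matrix.single i i 1 := by
    ext a b
    simp [Matrix.single, conjTranspose_apply, and_comm]
  split_ifs
  · simp only [conjTranspose_mul, star_eq_conjTranspose, conjTranspose_conjTranspose, hE,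
      mul_assoc]
  · exact conjTranspose_zero

lemma sum_specProj {M : Matrix A A ℂ} (hM : M.IsHermitian) :
    ∑ t ∈ Finset.univ.image hM.eigenvalues, specProj hM t = 1 := by
  classical
  unfold specProj
  rw [Finset.sum_comm]
  have h1 : ∀ i : A, ∑ t ∈ Finset.univ.image hM.eigenvalues,
      (if hM.eigenvalues i = t then
        (hM.eigenvectorUnitary : Matrix A A ℂ) * Matrix.single i i 1 *
          star (hM.eigenvectorUnitary : Matrix A A ℂ) else 0)
      = (hM.eigenvectorUnitary : Matrix A A ℂ) * Matrix.single i i 1 *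
          star (hM.eigenvectorUnitary : Matrix A A ℂ) := by
    intro i
    rw [Finset.sum_ite_eq, if_pos (Finset.mem_image_of_mem _ (Finset.mem_univ i))]
  rw [Finset.sum_congr rfl fun i _ => h1 i]
  have h2 : ∑ i : A, (hM.eigenvectorUnitary : Matrix A A ℂ) * Matrix.single i i 1 *
      star (hM.eigenvectorUnitary : Matrix A A ℂ)
      = (hM.eigenvectorUnitary : Matrix A A ℂ) * (∑ i : A, Matrix.single i i 1) *
          star (hM.eigenvectorUnitary : Matrix A A ℂ) := by
    rw [Finset.mul_sum, Finset.sum_mul]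
  rw [h2]
  have h3 : (∑ i : A, Matrix.single i i (1 : ℂ)) = 1 := by
    ext a b
    by_cases hab : a = b
    · subst hab
      simp [Matrix.sum_apply, Matrix.single, Matrix.one_apply]
    · simp [Matrix.sum_apply, Matrix.single, Matrix.one_apply, hab]
  rw [h3, mul_one]
  exact (Matrix.mem_unitaryGroup_iff).mp (hM.eigenvectorUnitary).2

lemma spec_ncard {ρ : Matrix A A ℂ} (h : ρ.IsHermitian) :
    (spectrum ℂ ρ).ncard = (Finset.univ.image h.eigenvalues).card := by
  have hs : spectrum ℂ ρ = Set.range (RCLike.ofReal ∘ h.eigenvalues) := by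
    rw [h.spectrum_eq_image_range, Set.range_comp]
  rw [hs, Set.range_comp, Set.ncard_image_of_injective _ RCLike.ofReal_injective]
  rw [← Set.ncard_coe_finset]
  congr 1
  ext x
  simp

end PinchingAux

/-- Pinching inequality: `P_ρ(ω) ≥ ω / |Spec(ρ)|` in the Loewner order. -/
theorem pinching_inequality {A : Type*} [Fintype A] [DecidableEq A]
    (ρ ω : Matrix A A ℂ) (hρ : ρ.PosSemidef) (hω : ω.PosSemidef) :
    (pinching ρ ω - (((spectrum ℂ ρ).ncard : ℂ))⁻¹ • ω).PosSemidef := by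
  classical
  have h : ρ.IsHermitian := hρ.1
  have hp : pinching ρ ω = ∑ t ∈ Finset.univ.image h.eigenvalues,
      specProj h t * ω * specProj h t := by
    unfold pinching
    rw [dif_pos h]
  by_cases hA : Nonempty A
  case neg =>
    have hemp : IsEmpty A := not_nonempty_iff.mp hA
    refine ⟨?_, fun x => ?_⟩
    · show _ᴴ = _
      ext i j
      exact (IsEmpty.false i).elim
    · simp [Finsupp.sum, Finset.eq_empty_of_isEmpty]
  case pos =>
  set T := Finset.univ.image h.eigenvalues with hT
  set N := T.card with hN
  have hNpos : 0 < N := Finset.card_pos.mpr (Finset.univ_nonempty.image _)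
  rw [hp, spec_ncard h, ← hT, ← hN]
  have hC : hω.sqrt * hω.sqrt = ω := hω.sqrt_mul_self
  have hCh : hω.sqrtᴴ = hω.sqrt := hω.posSemidef_sqrt.1
  have key1 : ∑ t ∈ T, specProj h t = 1 := sum_specProj h
  have key2 : ∀ t, (specProj h t)ᴴ = specProj h t := fun t => specProj_conjTranspose h t
  set S := ∑ t ∈ T, specProj h t * ω * specProj h t with hS
  set D := ∑ s ∈ T, ∑ t ∈ T, (hω.sqrt * specProj h s - hω.sqrt * specProj h t)ᴴ *
      (hω.sqrt * specProj h s - hω.sqrt * specProj h t) with hD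
  have hDpsd : D.PosSemidef := by
    refine Finset.sum_induction _ _ (fun a b ha hb => psd_add ha hb) Matrix.PosSemidef.zero ?_
    intro s _
    refine Finset.sum_induction _ _ (fun a b ha hb => psd_add ha hb) Matrix.PosSemidef.zero ?_
    intro t _
    exact Matrix.posSemidef_conjTranspose_mul_self _
  have expand : ∀ s t : ℝ, (hω.sqrt * specProj h s - hω.sqrt * specProj h t)ᴴ *
      (hω.sqrt * specProj h s - hω.sqrt * specProj h t)
      = specProj h s * ω * specProj h s - specProj h s * ω * specProj h t -
        (specProj h t * ω * specProj h s - specProj h t * ω * specProj h t) := by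
    intro s t
    rw [conjTranspose_sub, conjTranspose_mul, conjTranspose_mul, hCh, key2, key2]
    calc (specProj h s * hω.sqrt - specProj h t * hω.sqrt) *
        (hω.sqrt * specProj h s - hω.sqrt * specProj h t)
        = specProj h s * (hω.sqrt * hω.sqrt) * specProj h s -
            specProj h s * (hω.sqrt * hω.sqrt) * specProj h t -
            (specProj h t * (hω.sqrt * hω.sqrt) * specProj h s -
              specProj h t * (hω.sqrt * hω.sqrt) * specProj h t) := by noncomm_ring
      _ = _ := by rw [hC]
  have hωl : (∑ s ∈ T, specProj h s * ω) = ω := by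
    rw [← Finset.sum_mul, key1, one_mul]
  have hωr : (∑ s ∈ T, ω * specProj h s) = ω := by
    rw [← Finset.mul_sum, key1, mul_one]
  have hsum : D = (2 * (N : ℂ)) • S - (2 : ℂ) • ω := by
    calc D = ∑ s ∈ T, ∑ t ∈ T,
        (specProj h s * ω * specProj h s - specProj h s * ω * specProj h t -
          (specProj h t * ω * specProj h s - specProj h t * ω * specProj h t)) :=
          Finset.sum_congr rfl fun s _ => Finset.sum_congr rfl fun t _ => expand s t
      _ = ∑ s ∈ T, (N • (specProj h s * ω * specProj h s) - specProj h s * ω -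
            (ω * specProj h s - S)) := by
          refine Finset.sum_congr rfl fun s _ => ?_
          rw [Finset.sum_sub_distrib, Finset.sum_sub_distrib, Finset.sum_sub_distrib]
          congr 1
          · congr 1
            · rw [Finset.sum_const, hN]
            · rw [← Finset.mul_sum, key1, mul_one]
          · congr 1
            rw [← Finset.sum_mul, ← Finset.sum_mul, key1, one_mul]
      _ = N • S - ω - (ω - N • S) := by
          rw [Finset.sum_sub_distrib, Finset.sum_sub_distrib, ← Finset.smul_sum, ← hS,
            Finset.sum_sub_distrib, hωl, hωr, Finset.sum_const, hN]
      _ = (2 * (N : ℂ)) • S - (2 : ℂ) • ω := by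
          rw [← Nat.cast_smul_eq_nsmul ℂ N S, mul_smul, two_smul, two_smul]
          abel
  have h2N : (2 * (N : ℂ)) ≠ 0 :=
    mul_ne_zero two_ne_zero (Nat.cast_ne_zero.mpr hNpos.ne')
  have hinv : (2 * (N : ℂ))⁻¹ * 2 = ((N : ℂ))⁻¹ := by
    field_simp
  have heq : S - ((N : ℂ))⁻¹ • ω = (2 * (N : ℂ))⁻¹ • D := by
    rw [hsum, smul_sub, smul_smul, smul_smul, inv_mul_cancel₀ h2N, one_smul, hinv]
  rw [heq]
  refine psd_smul ?_ hDpsd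
  have hcast : ((2 * (N : ℂ)))⁻¹ = (((2 * (N : ℝ))⁻¹ : ℝ) : ℂ) := by
    push_cast
    ring
  rw [hcast]
  exact Complex.zero_le_real.mpr (by positivity)


end GEAT
end
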